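/- If a set S of cycle lengths is such that, for some fixed nonnegative integer D, every planar graph containing no cycle whose length lies in S is (0, 0, D)-colorable, then 3 is in S or 4 is in S. -/

import Mathlib

open SimpleGraph

/-- `H` is a minor of `G`: branch sets are nonempty, connected, pairwise disjoint,
and edges of `H` are realized between branch sets. -/
def SimpleGraph.IsMinor {W V : Type*} (H : SimpleGraph W) (G : SimpleGraph V) : Prop :=
  ∃ f : W → Set V, (∀ w, (f w).Nonempty) ∧ (∀ w, (G.induce (f w)).Connected) ∧
    (∀ w w', w ≠ w' → Disjoint (f w) (f w')) ∧
    (∀ w w', H.Adj w w' → ∃ a ∈ f w, ∃ b ∈ f w', G.Adj a b)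

/-- A graph is planar iff it has no `K₅` minor and no `K₃,₃` minor (Wagner's theorem). -/
def SimpleGraph.Planar {V : Type*} (G : SimpleGraph V) : Prop :=
  ¬ (completeGraph (Fin 5)).IsMinor G ∧
    ¬ (completeBipartiteGraph (Fin 3) (Fin 3)).IsMinor G

/-- `G` contains no cycle of length `n` (as a subgraph). -/
def SimpleGraph.HasNoCycleOfLength {V : Type*} (G : SimpleGraph V) (n : ℕ) : Prop :=
  ∀ (v : V) (w : G.Walk v v), w.IsCycle → w.length ≠ n

/-- `f` is a `(d 0, …, d (k-1))`-coloring of `G`: each vertex has at most `d (f v)`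
neighbors in its own color class. -/
def SimpleGraph.IsDefectiveColoring {V : Type*} {k : ℕ} (G : SimpleGraph V)
    (d : Fin k → ℕ) (f : V → Fin k) : Prop :=
  ∀ v, {u | G.Adj v u ∧ f u = f v}.ncard ≤ d (f v)

/-- `G` is `(d 0, …, d (k-1))`-colorable. -/
def SimpleGraph.DefectiveColorable {V : Type*} {k : ℕ} (G : SimpleGraph V)
    (d : Fin k → ℕ) : Prop :=
  ∃ f : V → Fin k, G.IsDefectiveColoring d f
namespace Stmt14

abbrev V (D : ℕ) : Type := Fin 3 ⊕ (Fin 3 × Fin (D+1) × Fin 3)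

def adj (D : ℕ) : V D → V D → Prop
  | .inl h, .inl h' => h ≠ h'
  | .inl h, .inr (h', _, _) => h = h'
  | .inr (h, _, _), .inl h' => h = h'
  | .inr (h, i, j), .inr (h', i', j') => h = h' ∧ i = i' ∧ j ≠ j'

def G (D : ℕ) : SimpleGraph (V D) where
  Adj := adj D
  symm := ⟨by
    rintro (h | ⟨h, i, j⟩) (h' | ⟨h', i', j'⟩) <;> simp [adj] <;> tauto⟩
  loopless := ⟨by
    rintro (h | ⟨h, i, j⟩) <;> simp [adj]⟩

variable {D : ℕ}

lemma adj_inl_inl {h h' : Fin 3} : (G D).Adj (.inl h) (.inl h') ↔ h ≠ h' := Iff.rfl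
lemma adj_inl_inr {h h' : Fin 3} {i : Fin (D+1)} {j : Fin 3} :
    (G D).Adj (.inl h) (.inr (h', i, j)) ↔ h = h' := Iff.rfl
lemma adj_inr_inr {h h' : Fin 3} {i i' : Fin (D+1)} {j j' : Fin 3} :
    (G D).Adj (.inr (h, i, j)) (.inr (h', i', j')) ↔ h = h' ∧ i = i' ∧ j ≠ j' := Iff.rfl

/-- Neighbors of a periphery vertex lie in its closed block. -/
lemma adj_inr {h : Fin 3} {i : Fin (D+1)} {j : Fin 3} {u : V D}
    (hadj : (G D).Adj (.inr (h, i, j)) u) :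
    u = .inl h ∨ ∃ j', u = .inr (h, i, j') := by
  rcases u with h' | ⟨h', i', j'⟩
  · left
    have : h = h' := hadj
    rw [this]
  · right
    obtain ⟨rfl, rfl, _⟩ := (adj_inr_inr).1 hadj
    exact ⟨j', rfl⟩

/-- A walk from a periphery vertex to a vertex outside the periphery passes the hub. -/
lemma walk_sep {h : Fin 3} {i : Fin (D+1)} :
    ∀ {a b : V D} (w : (G D).Walk a b), (∃ j, a = .inr (h, i, j)) →
      (∀ j, b ≠ .inr (h, i, j)) → (Sum.inl h : V D) ∈ w.support := by
  intro a b w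
  induction w with
  | nil =>
    rintro ⟨j, rfl⟩ hb
    exact absurd rfl (hb j)
  | cons hadj w ih =>
    rintro ⟨j, rfl⟩ hb
    rcases adj_inr hadj with rfl | ⟨j', rfl⟩
    · simp [SimpleGraph.Walk.support_cons]
    · exact List.mem_cons_of_mem _ (ih ⟨j', rfl⟩ hb)

/-- An induced-connected set meeting a periphery and its complement contains the hub. -/
lemma connected_sep {h : Fin 3} {i : Fin (D+1)} {S : Set (V D)}
    (hconn : ((G D).induce S).Connected) {j : Fin 3}
    (hmem : (Sum.inr (h, i, j) : V D) ∈ S) {b : V D} (hb : b ∈ S)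
    (hbp : ∀ j', b ≠ .inr (h, i, j')) : (Sum.inl h : V D) ∈ S := by
  obtain ⟨w⟩ := hconn.preconnected ⟨_, hmem⟩ ⟨b, hb⟩
  -- walk in induced graph; induct

  suffices H : ∀ (x y : S) (w : ((G D).induce S).Walk x y), (∃ j, x.1 = .inr (h, i, j)) →
      (∀ j', y.1 ≠ .inr (h, i, j')) → (Sum.inl h : V D) ∈ S by
    exact H _ _ w ⟨j, rfl⟩ hbp
  intro x y w
  induction w with
  | nil =>
    rintro ⟨j0, hx⟩ hy
    exact absurd hx (hy j0)
  | @cons x u y hadj w ih =>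
    rintro ⟨j0, hx⟩ hy
    have hadj' : (G D).Adj x.1 u.1 := hadj
    rw [hx] at hadj'
    rcases adj_inr hadj' with hu | ⟨j', hu⟩
    · rw [← hu]; exact u.2
    · exact ih ⟨j', hu⟩ hy


lemma tail_length {a b : V D} (w : (G D).Walk a b) : w.support.tail.length = w.length := by
  have h1 := w.length_support
  rw [w.support_eq_cons] at h1
  simpa using h1.symm

lemma cycle_support_subset {h : Fin 3} {i : Fin (D+1)} {j : Fin 3}
    (w : (G D).Walk (.inr (h, i, j)) (.inr (h, i, j))) (hc : w.IsCycle) :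
    ∀ b ∈ w.support, b = Sum.inl h ∨ ∃ j', b = Sum.inr (h, i, j') := by
  classical
  intro b hb
  by_contra hcon
  push_neg at hcon
  obtain ⟨hb1, hb2⟩ := hcon
  have hspec := w.take_spec hb
  set p := w.takeUntil b hb with hp_def
  set q := w.dropUntil b hb with hq_def
  have hp : (Sum.inl h : V D) ∈ p.support := walk_sep p ⟨j, rfl⟩ hb2
  have hq : (Sum.inl h : V D) ∈ q.support := by
    have := walk_sep q.reverse ⟨j, rfl⟩ hb2
    rwa [SimpleGraph.Walk.support_reverse, List.mem_reverse] at this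
  have htail : w.support.tail = p.support.tail ++ q.support.tail := by
    have h1 : w.support = p.support ++ q.support.tail := by
      rw [← hspec, SimpleGraph.Walk.support_append]
    rw [p.support_eq_cons] at h1
    rw [w.support_eq_cons] at h1
    rw [List.cons_append] at h1
    exact List.cons_injective h1
  have hnd := hc.support_nodup
  rw [htail] at hnd
  have hdisj := (List.nodup_append.mp hnd).2.2
  have hp' : (Sum.inl h : V D) ∈ p.support.tail := by
    rw [p.support_eq_cons] at hp
    rcases List.mem_cons.mp hp with h' | h'
    · exact absurd h'.symm (by simp)
    · exact h'
  have hq' : (Sum.inl h : V D) ∈ q.support.tail := by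
    rw [q.support_eq_cons] at hq
    rcases List.mem_cons.mp hq with h' | h'
    · exact absurd h' hb1.symm
    · exact h'
  exact hdisj _ hp' _ hq' rfl

lemma cycle_length {v : V D} (w : (G D).Walk v v) (hc : w.IsCycle) :
    w.length = 3 ∨ w.length = 4 := by
  classical
  have h3 := hc.three_le_length
  suffices hle : w.length ≤ 4 by omega
  by_cases hex : ∃ x ∈ w.support, ∃ h i j, x = Sum.inr (h, i, j)
  · obtain ⟨x, hx, h, i, j, rfl⟩ := hex
    set w' := w.rotate _ hx with hw'
    have hc' := hc.rotate hx
    have hlen : w'.length = w.length := by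
      have hperm := (SimpleGraph.Walk.support_rotate w _ hx).perm.length_eq
      rw [tail_length, tail_length] at hperm
      exact hperm
    rw [← hlen]
    have hsupp := cycle_support_subset w' hc'
    set F : Finset (V D) :=
      {Sum.inl h, Sum.inr (h, i, 0), Sum.inr (h, i, 1), Sum.inr (h, i, 2)} with hF
    have hsub : w'.support.tail.toFinset ⊆ F := by
      intro b hbmem
      rw [List.mem_toFinset] at hbmem
      rcases hsupp b (List.mem_of_mem_tail hbmem) with rfl | ⟨j', rfl⟩
      · simp [hF]
      · fin_cases j' <;> simp [hF]
    have hFc : F.card ≤ 4 := by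
      refine le_trans (Finset.card_insert_le _ _) (Nat.succ_le_succ ?_)
      refine le_trans (Finset.card_insert_le _ _) (Nat.succ_le_succ ?_)
      refine le_trans (Finset.card_insert_le _ _) (Nat.succ_le_succ ?_)
      simp
    calc w'.length = w'.support.tail.toFinset.card := by
            rw [List.toFinset_card_of_nodup hc'.support_nodup, tail_length]
      _ ≤ F.card := Finset.card_le_card hsub
      _ ≤ 4 := hFc
  · push_neg at hex
    set F : Finset (V D) := {Sum.inl 0, Sum.inl 1, Sum.inl 2} with hF
    have hsub : w.support.tail.toFinset ⊆ F := by
      intro b hbmem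
      rw [List.mem_toFinset] at hbmem
      have hb := List.mem_of_mem_tail hbmem
      rcases b with hh | ⟨hh, ii, jj⟩
      · fin_cases hh <;> simp [hF]
      · exact absurd rfl (hex _ hb hh ii jj)
    have hFc : F.card ≤ 3 := by
      refine le_trans (Finset.card_insert_le _ _) (Nat.succ_le_succ ?_)
      refine le_trans (Finset.card_insert_le _ _) (Nat.succ_le_succ ?_)
      simp
    have : w.length ≤ 3 := by
      calc w.length = w.support.tail.toFinset.card := by
            rw [List.toFinset_card_of_nodup hc.support_nodup, tail_length]
        _ ≤ F.card := Finset.card_le_card hsub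
        _ ≤ 3 := hFc
    omega


lemma classify {S : Set (V D)} (hne : S.Nonempty) (hconn : ((G D).induce S).Connected) :
    (∃ h, Sum.inl h ∈ S) ∨ ∃ h i, ∀ x ∈ S, ∃ j, x = Sum.inr (h, i, j) := by
  obtain ⟨a, ha⟩ := hne
  rcases a with h | ⟨h, i, j⟩
  · exact Or.inl ⟨h, ha⟩
  · by_cases hall : ∀ x ∈ S, ∃ j', x = Sum.inr (h, i, j')
    · exact Or.inr ⟨h, i, hall⟩
    · push_neg at hall
      obtain ⟨b, hb, hbp⟩ := hall
      exact Or.inl ⟨h, connected_sep hconn ha hb hbp⟩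

def cmap (D : ℕ) (h : Fin 3) (i : Fin (D+1)) : Option (Fin 3) → V D
  | none => Sum.inl h
  | some j => Sum.inr (h, i, j)

lemma cmap_inj {h : Fin 3} {i : Fin (D+1)} : Function.Injective (cmap D h i) := by
  rintro (_ | a) (_ | b) hab <;> simp [cmap] at hab ⊢
  exact hab

lemma two_of_three (p : Fin 3 → Prop) :
    (∃ a b : Fin 3, a ≠ b ∧ p a ∧ p b) ∨ (∃ a b : Fin 3, a ≠ b ∧ ¬p a ∧ ¬p b) := by
  by_cases h0 : p 0 <;> by_cases h1 : p 1 <;> by_cases h2 : p 2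
  · exact Or.inl ⟨0, 1, by decide, h0, h1⟩
  · exact Or.inl ⟨0, 1, by decide, h0, h1⟩
  · exact Or.inl ⟨0, 2, by decide, h0, h2⟩
  · exact Or.inr ⟨1, 2, by decide, h1, h2⟩
  · exact Or.inl ⟨1, 2, by decide, h1, h2⟩
  · exact Or.inr ⟨0, 2, by decide, h0, h2⟩
  · exact Or.inr ⟨0, 1, by decide, h0, h1⟩
  · exact Or.inr ⟨0, 1, by decide, h0, h1⟩

lemma no_K5 : ¬ (completeGraph (Fin 5)).IsMinor (G D) := by
  rintro ⟨f, hne, hconn, hdisj, hedge⟩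
  have hmem_eq : ∀ {w w' : Fin 5} {x : V D}, x ∈ f w → x ∈ f w' → w = w' := by
    intro w w' x hx hx'
    by_contra hww
    exact Set.disjoint_left.mp (hdisj w w' hww) hx hx'
  by_cases hall : ∀ w, ∃ h, Sum.inl h ∈ f w
  · choose t ht using hall
    have hinj : Function.Injective t := by
      intro w w' htw
      exact hmem_eq (ht w) (htw ▸ ht w')
    have := Fintype.card_le_of_injective t hinj
    simp at this
  · push_neg at hall
    obtain ⟨w0, hw0⟩ := hall
    rcases classify (hne w0) (hconn w0) with ⟨h, hh⟩ | ⟨h, i, hper⟩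
    · exact hw0 h hh
    have key : ∀ w : Fin 5, ∃ o : Option (Fin 3), cmap D h i o ∈ f w := by
      intro w
      by_cases hww : w = w0
      · subst hww
        obtain ⟨a, ha⟩ := hne w
        obtain ⟨j, rfl⟩ := hper a ha
        exact ⟨some j, ha⟩
      · obtain ⟨a, ha, b, hb, hab⟩ := hedge w w0 hww
        obtain ⟨jb, rfl⟩ := hper b hb
        rcases adj_inr hab.symm with rfl | ⟨j', rfl⟩
        · exact ⟨none, ha⟩
        · exact ⟨some j', ha⟩
    choose s hs using key
    have hinj : Function.Injective s := by
      intro w w' hsw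
      exact hmem_eq (hs w) (hsw ▸ hs w')
    have := Fintype.card_le_of_injective s hinj
    simp at this

lemma no_K33 : ¬ (completeBipartiteGraph (Fin 3) (Fin 3)).IsMinor (G D) := by
  rintro ⟨f, hne, hconn, hdisj, hedge⟩
  have hmem_eq : ∀ {w w' : Fin 3 ⊕ Fin 3} {x : V D}, x ∈ f w → x ∈ f w' → w = w' := by
    intro w w' x hx hx'
    by_contra hww
    exact Set.disjoint_left.mp (hdisj w w' hww) hx hx'
  -- the "two same-side non-hub branch sets" contradiction
  have same_side : ∀ (w1 w2 : Fin 3 ⊕ Fin 3) (r : Fin 3 → Fin 3 ⊕ Fin 3),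
      w1 ≠ w2 → Function.Injective r →
      (∀ m, (completeBipartiteGraph (Fin 3) (Fin 3)).Adj w1 (r m)) →
      (∀ m, (completeBipartiteGraph (Fin 3) (Fin 3)).Adj w2 (r m)) →
      (¬ ∃ h, Sum.inl h ∈ f w1) → (¬ ∃ h, Sum.inl h ∈ f w2) → False := by
    intro w1 w2 r hw12 hrinj hr1 hr2 hnh1 hnh2
    obtain ⟨h1, i1, hper1⟩ := (classify (hne w1) (hconn w1)).resolve_left hnh1
    obtain ⟨h2, i2, hper2⟩ := (classify (hne w2) (hconn w2)).resolve_left hnh2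
    have hrw1 : ∀ m, r m ≠ w1 := fun m hh => (hr1 m).ne hh.symm
    have hrw2 : ∀ m, r m ≠ w2 := fun m hh => (hr2 m).ne hh.symm
    by_cases hblock : h1 = h2 ∧ i1 = i2
    · obtain ⟨rfl, rfl⟩ := hblock
      -- five disjoint sets each meet the 4-element closed block
      have key : ∀ z : Bool ⊕ Fin 3, ∃ o : Option (Fin 3),
          cmap D h1 i1 o ∈ f (Sum.elim (fun b => cond b w1 w2) r z) := by
        rintro (b | m)
        · cases b
          · obtain ⟨a, ha⟩ := hne w2
            obtain ⟨j, rfl⟩ := hper2 a ha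
            exact ⟨some j, ha⟩
          · obtain ⟨a, ha⟩ := hne w1
            obtain ⟨j, rfl⟩ := hper1 a ha
            exact ⟨some j, ha⟩
        · obtain ⟨a, ha, b, hb, hab⟩ := hedge w1 (r m) (hr1 m)
          obtain ⟨ja, rfl⟩ := hper1 a ha
          rcases adj_inr hab with rfl | ⟨j', rfl⟩
          · exact ⟨none, hb⟩
          · exact ⟨some j', hb⟩
      choose s hs using key
      have hidx : Function.Injective (Sum.elim (fun b : Bool => cond b w1 w2) r) := by
        rintro (b | m) (b' | m') hzz
        · simp only [Sum.elim_inl] at hzz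
          cases b <;> cases b' <;>
            first | rfl | exact absurd hzz (Ne.symm hw12) | exact absurd hzz hw12
        · simp only [Sum.elim_inl, Sum.elim_inr] at hzz
          cases b
          · exact absurd hzz.symm (hrw2 m')
          · exact absurd hzz.symm (hrw1 m')
        · simp only [Sum.elim_inl, Sum.elim_inr] at hzz
          cases b'
          · exact absurd hzz (hrw2 m)
          · exact absurd hzz (hrw1 m)
        · simp only [Sum.elim_inr] at hzz
          exact congrArg Sum.inr (hrinj hzz)
      have hinj : Function.Injective s := by
        intro z z' hsz
        exact hidx (hmem_eq (hs z) (hsz ▸ hs z'))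
      have := Fintype.card_le_of_injective s hinj
      simp at this
    · -- different blocks: every r-branch-set contains hub h1 or hub h2
      have hP12 : ∀ (j j' : Fin 3), (Sum.inr (h2, i2, j') : V D) ≠ Sum.inr (h1, i1, j) := by
        intro j j' hq
        rw [Sum.inr.injEq, Prod.mk.injEq, Prod.mk.injEq] at hq
        exact hblock ⟨hq.1.symm, hq.2.1.symm⟩
      have key : ∀ m, Sum.inl h1 ∈ f (r m) ∨ Sum.inl h2 ∈ f (r m) := by
        intro m
        obtain ⟨a1, ha1, b1, hb1, hab1⟩ := hedge w1 (r m) (hr1 m)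
        obtain ⟨ja1, rfl⟩ := hper1 a1 ha1
        obtain ⟨a2, ha2, b2, hb2, hab2⟩ := hedge w2 (r m) (hr2 m)
        obtain ⟨ja2, rfl⟩ := hper2 a2 ha2
        rcases adj_inr hab1 with rfl | ⟨j1', rfl⟩
        · exact Or.inl hb1
        rcases adj_inr hab2 with rfl | ⟨j2', rfl⟩
        · exact Or.inr hb2
        exact Or.inl (connected_sep (hconn (r m)) hb1 hb2 (fun j' => hP12 j' j2'))
      rcases two_of_three (fun m => Sum.inl h1 ∈ f (r m)) with
        ⟨a, b, hab, ha, hb⟩ | ⟨a, b, hab, ha, hb⟩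
      · exact hab (hrinj (hmem_eq ha hb))
      · have ha' := (key a).resolve_left ha
        have hb' := (key b).resolve_left hb
        exact hab (hrinj (hmem_eq ha' hb'))
  -- now the global case analysis
  have hadjLR : ∀ (a m : Fin 3),
      (completeBipartiteGraph (Fin 3) (Fin 3)).Adj (Sum.inl a) (Sum.inr m) := by
    intro a m; simp
  have hadjRL : ∀ (a m : Fin 3),
      (completeBipartiteGraph (Fin 3) (Fin 3)).Adj (Sum.inr a) (Sum.inl m) := by
    intro a m; simp
  rcases two_of_three (fun a => ∃ h, Sum.inl h ∈ f (Sum.inl a)) with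
    ⟨a, b, hab, ⟨ta, hta⟩, ⟨tb, htb⟩⟩ | ⟨a, b, hab, ha, hb⟩
  · rcases two_of_three (fun m => ∃ h, Sum.inl h ∈ f (Sum.inr m)) with
      ⟨c, d, hcd, ⟨tc, htc⟩, ⟨td, htd⟩⟩ | ⟨c, d, hcd, hc, hd⟩
    · -- four hub-containing branch sets, but only three hubs
      have d1 : ta ≠ tb := fun hh => hab (Sum.inl_injective (hmem_eq hta (hh ▸ htb)))
      have d2 : ta ≠ tc := fun hh => Sum.inl_ne_inr (hmem_eq hta (hh ▸ htc))
      have d3 : ta ≠ td := fun hh => Sum.inl_ne_inr (hmem_eq hta (hh ▸ htd))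
      have d4 : tb ≠ tc := fun hh => Sum.inl_ne_inr (hmem_eq htb (hh ▸ htc))
      have d5 : tb ≠ td := fun hh => Sum.inl_ne_inr (hmem_eq htb (hh ▸ htd))
      have d6 : tc ≠ td := fun hh => hcd (Sum.inr_injective (hmem_eq htc (hh ▸ htd)))
      have v1 := ta.is_lt; have v2 := tb.is_lt; have v3 := tc.is_lt; have v4 := td.is_lt
      rw [Fin.ne_iff_vne] at d1 d2 d3 d4 d5 d6
      omega
    · exact same_side (Sum.inr c) (Sum.inr d) Sum.inl (by simp [hcd])
        (fun x y => by simp) (fun m => hadjRL c m) (fun m => hadjRL d m) hc hd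
  · exact same_side (Sum.inl a) (Sum.inl b) Sum.inr (by simp [hab])
      (fun x y => by simp) (fun m => hadjLR a m) (fun m => hadjLR b m) ha hb


lemma dval_ne_two {c : Fin 3} (hc : c ≠ 2) : (![0, 0, D] : Fin 3 → ℕ) c = 0 := by
  fin_cases c <;> simp_all

lemma dval_two : (![0, 0, D] : Fin 3 → ℕ) 2 = D := rfl

lemma indep01 {f : V D → Fin 3} (hf : (G D).IsDefectiveColoring ![0, 0, D] f)
    {u v : V D} (hadj : (G D).Adj u v) (h2 : f v ≠ 2) : f u ≠ f v := by
  intro heq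
  have hle := hf v
  rw [dval_ne_two h2] at hle
  have hpos : 0 < {u' | (G D).Adj v u' ∧ f u' = f v}.ncard := by
    rw [Set.ncard_pos (Set.toFinite _)]
    exact ⟨u, hadj.symm, heq⟩
  omega

lemma triangle_two {f : V D → Fin 3} (hf : (G D).IsDefectiveColoring ![0, 0, D] f)
    {a b c : V D} (hab : (G D).Adj a b) (hac : (G D).Adj a c) (hbc : (G D).Adj b c) :
    f a = 2 ∨ f b = 2 ∨ f c = 2 := by
  by_contra hcon
  push_neg at hcon
  obtain ⟨h2a, h2b, h2c⟩ := hcon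
  have d1 := indep01 hf hab h2b
  have d2 := indep01 hf hac h2c
  have d3 := indep01 hf hbc h2c
  have v1 := (f a).is_lt; have v2 := (f b).is_lt; have v3 := (f c).is_lt
  rw [Fin.ne_iff_vne] at d1 d2 d3 h2a h2b h2c
  simp only [Fin.val_two] at h2a h2b h2c
  omega

lemma hub_ne_two {f : V D → Fin 3} (hf : (G D).IsDefectiveColoring ![0, 0, D] f)
    (h : Fin 3) : f (Sum.inl h) ≠ 2 := by
  intro h2
  have key : ∀ i : Fin (D+1), ∃ j : Fin 3, f (Sum.inr (h, i, j)) = 2 := by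
    intro i
    rcases triangle_two hf
        (adj_inr_inr.2 ⟨rfl, rfl, by decide⟩ :
          (G D).Adj (Sum.inr (h, i, 0)) (Sum.inr (h, i, 1)))
        (adj_inr_inr.2 ⟨rfl, rfl, by decide⟩ :
          (G D).Adj (Sum.inr (h, i, 0)) (Sum.inr (h, i, 2)))
        (adj_inr_inr.2 ⟨rfl, rfl, by decide⟩ :
          (G D).Adj (Sum.inr (h, i, 1)) (Sum.inr (h, i, 2))) with
      hj | hj | hj
    · exact ⟨0, hj⟩
    · exact ⟨1, hj⟩
    · exact ⟨2, hj⟩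
  choose jj hjj using key
  set N : Set (V D) := {u | (G D).Adj (Sum.inl h) u ∧ f u = f (Sum.inl h)} with hN
  have hsub : ∀ i : Fin (D+1), (Sum.inr (h, i, jj i) : V D) ∈ N := by
    intro i
    exact ⟨adj_inl_inr.2 rfl, by rw [hjj i, h2]⟩
  have hinj : Function.Injective (fun i : Fin (D+1) => (Sum.inr (h, i, jj i) : V D)) := by
    intro i i' hii
    simp only [Sum.inr.injEq, Prod.mk.injEq] at hii
    exact hii.2.1
  have hcard : D + 1 ≤ N.ncard := by
    calc D + 1 = (Set.univ : Set (Fin (D+1))).ncard := by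
          rw [Set.ncard_univ]; simp
      _ = ((fun i : Fin (D+1) => (Sum.inr (h, i, jj i) : V D)) '' Set.univ).ncard :=
          (Set.ncard_image_of_injective _ hinj).symm
      _ ≤ N.ncard := by
          refine Set.ncard_le_ncard ?_ (Set.toFinite _)
          rintro x ⟨i, -, rfl⟩
          exact hsub i
  have hle := hf (Sum.inl h)
  rw [h2, dval_two] at hle
  have hNeq : N = {u | (G D).Adj (Sum.inl h) u ∧ f u = 2} := by rw [hN, h2]
  rw [← hNeq] at hle
  omega

lemma no_coloring : ¬ (G D).DefectiveColorable ![0, 0, D] := by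
  rintro ⟨f, hf⟩
  rcases triangle_two hf
      (adj_inl_inl.2 (by decide) : (G D).Adj (Sum.inl 0) (Sum.inl 1))
      (adj_inl_inl.2 (by decide) : (G D).Adj (Sum.inl 0) (Sum.inl 2))
      (adj_inl_inl.2 (by decide) : (G D).Adj (Sum.inl 1) (Sum.inl 2)) with
    hh | hh | hh
  · exact hub_ne_two hf 0 hh
  · exact hub_ne_two hf 1 hh
  · exact hub_ne_two hf 2 hh

end Stmt14

theorem stmt14 (S : Set ℕ)
    (h : ∃ D : ℕ, ∀ (V : Type) [Fintype V] (G : SimpleGraph V), G.Planar →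
      (∀ n ∈ S, G.HasNoCycleOfLength n) → G.DefectiveColorable ![0, 0, D]) :
    3 ∈ S ∨ 4 ∈ S := by
  by_contra hS
  push_neg at hS
  obtain ⟨D, hD⟩ := h
  refine Stmt14.no_coloring (D := D) (hD (Stmt14.V D) (Stmt14.G D)
    ⟨Stmt14.no_K5, Stmt14.no_K33⟩ ?_)
  intro n hn v w hc hlen
  rcases Stmt14.cycle_length w hc with h3 | h4
  · rw [h3] at hlen; exact hS.1 (hlen ▸ hn)
  · rw [h4] at hlen; exact hS.2 (hlen ▸ hn)
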